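/- Let S be a perfect subtree of 2^{<ω}, let Θ_S be the canonical isomorphism between the splitting nodes of S and 2^{<ω}, and let D be a dense subset of Cohen forcing (2^{<ω} ordered by end-extension). Then the set D_S = {t ∈ 𝔸_{𝕊,S} : every terminal node p of t satisfies Θ_S(p) ∈ D} is dense in 𝔸_{𝕊,S}. -/
import Mathlib


def IsTree (T : Set (List Bool)) : Prop :=
  ∀ ⦃l m : List Bool⦄, l <+: m → m ∈ T → l ∈ T

def SplitsAt (T : Set (List Bool)) (l : List Bool) : Prop :=
  l ++ [false] ∈ T ∧ l ++ [true] ∈ T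

def PerfectTree (T : Set (List Bool)) : Prop :=
  T.Nonempty ∧ IsTree T ∧ ∀ l ∈ T, ∃ m ∈ T, l <+: m ∧ SplitsAt T m

/-- The splitting nodes of `T`. -/
def splitNodes (T : Set (List Bool)) : Set (List Bool) :=
  {l | l ∈ T ∧ SplitsAt T l}

def FullBin (n : ℕ) : Set (List Bool) := {l | l.length ≤ n}

def IsoTo (t u : Set (List Bool)) : Prop :=
  ∃ e : t ≃ u, ∀ a b : t, (a : List Bool) <+: (b : List Bool) ↔
    ((e a : List Bool) <+: (e b : List Bool))

/-- The auxiliary forcing `𝔸_{𝕊,S}`: finite subtrees of `S` isomorphic to some `2^{≤n}`. -/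
def SacksAux (S : Set (List Bool)) : Set (Set (List Bool)) :=
  {t | t ⊆ S ∧ t.Finite ∧ ∃ n, IsoTo t (FullBin n)}

noncomputable def height (t : Set (List Bool)) : ℕ :=
  sSup (List.length '' t)

/-- End-extension order on `𝔸_{𝕊,S}`. -/
def EndExt (t s : Set (List Bool)) : Prop :=
  s ⊆ t ∧ ∀ l ∈ t, l.length ≤ height s → l ∈ s

/-- The terminal (maximal) nodes of `t`. -/
def Term (t : Set (List Bool)) : Set (List Bool) :=
  {p | p ∈ t ∧ ∀ q ∈ t, p <+: q → q = p}

lemma prefix_comparable {a b c : List Bool} (h1 : a <+: c) (h2 : b <+: c) :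
    a <+: b ∨ b <+: a := by
  rcases le_total a.length b.length with h | h
  · exact Or.inl (List.prefix_of_prefix_length_le h1 h2 h)
  · exact Or.inr (List.prefix_of_prefix_length_le h2 h1 h)

lemma exists_split_ge {S : Set (List Bool)} (hS : PerfectTree S) :
    ∀ k, ∀ l ∈ S, ∃ q ∈ splitNodes S, l <+: q ∧ k ≤ q.length := by
  intro k
  induction k with
  | zero =>
    intro l hl
    obtain ⟨m, hm, hlm, hsp⟩ := hS.2.2 l hl
    exact ⟨m, ⟨hm, hsp⟩, hlm, Nat.zero_le _⟩
  | succ k ih =>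
    intro l hl
    obtain ⟨q, hq, hlq, hk⟩ := ih l hl
    obtain ⟨m, hm, hqm, hsp⟩ := hS.2.2 (q ++ [true]) hq.2.2
    refine ⟨m, ⟨hm, hsp⟩, hlq.trans ((List.prefix_append q [true]).trans hqm), ?_⟩
    have := hqm.length_le
    simp at this
    omega

lemma exists_split_inD {S : Set (List Bool)} (hS : PerfectTree S)
    {Θ : List Bool → List Bool}
    (hbij : Set.BijOn Θ (splitNodes S) Set.univ)
    (hord : ∀ a ∈ splitNodes S, ∀ b ∈ splitNodes S, (a <+: b ↔ Θ a <+: Θ b))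
    {D : Set (List Bool)} (hD : ∀ a : List Bool, ∃ b ∈ D, a <+: b) :
    ∀ q ∈ S, ∃ c ∈ splitNodes S, Θ c ∈ D ∧ q <+: c := by
  intro q hq
  obtain ⟨r, hr, hqr, hsplit⟩ := hS.2.2 q hq
  obtain ⟨d, hd, hrd⟩ := hD (Θ r)
  obtain ⟨cn, hc, hcd⟩ := hbij.surjOn (Set.mem_univ d)
  refine ⟨cn, hc, hcd ▸ hd, hqr.trans ?_⟩
  refine (hord r ⟨hr, hsplit⟩ cn hc).2 ?_
  rw [hcd]
  exact hrd

lemma fullBin_maximal {n : ℕ} {l : List Bool} (h : l.length = n) :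
    ∀ m ∈ FullBin n, l <+: m → m = l := by
  intro m hm hlm
  exact (hlm.eq_of_length_le (by simpa [FullBin, h] using hm)).symm

lemma fullBin_length_of_maximal {n : ℕ} {l : List Bool} (hl : l ∈ FullBin n)
    (h : ∀ m ∈ FullBin n, l <+: m → m = l) : l.length = n := by
  by_contra hne
  have hlt : l.length < n := lt_of_le_of_ne hl hne
  have h1 : (l ++ [true]) ∈ FullBin n := by simp [FullBin]; omega
  have := h _ h1 (List.prefix_append l [true])
  simp at this

lemma term_iff {t : Set (List Bool)} {n : ℕ} (e : t ≃ FullBin n)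
    (he : ∀ a b : t, (a : List Bool) <+: (b : List Bool) ↔
      ((e a : List Bool) <+: (e b : List Bool))) (x : t) :
    (x : List Bool) ∈ Term t ↔ (e x : List Bool).length = n := by
  constructor
  · intro hx
    apply fullBin_length_of_maximal (e x).2
    intro m hm hpre
    set q := e.symm ⟨m, hm⟩ with hq
    have heq : e q = ⟨m, hm⟩ := Equiv.apply_symm_apply e ⟨m, hm⟩
    have hxq : (x : List Bool) <+: (q : List Bool) := by
      rw [he x q, heq]; exact hpre
    have hvq : (q : List Bool) = (x : List Bool) := hx.2 _ q.2 hxq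
    have hqx : q = x := Subtype.ext hvq
    calc m = (e q : List Bool) := by rw [heq]
      _ = (e x : List Bool) := by rw [hqx]
  · intro hlen
    refine ⟨x.2, fun q hq hpre => ?_⟩
    have hxq : (x : List Bool) <+: ((⟨q, hq⟩ : t) : List Bool) := hpre
    rw [he x ⟨q, hq⟩] at hxq
    have h1 : (e ⟨q, hq⟩ : List Bool) = (e x : List Bool) :=
      fullBin_maximal hlen _ (e ⟨q, hq⟩).2 hxq
    have h2 : e ⟨q, hq⟩ = e x := Subtype.ext h1
    have := e.injective h2
    exact congrArg Subtype.val this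

lemma exists_term_above {t : Set (List Bool)} {n : ℕ} (e : t ≃ FullBin n)
    (he : ∀ a b : t, (a : List Bool) <+: (b : List Bool) ↔
      ((e a : List Bool) <+: (e b : List Bool))) :
    ∀ x ∈ t, ∃ p ∈ Term t, x <+: p := by
  intro x hx
  set x' : t := ⟨x, hx⟩ with hx'
  have hlen : (e x' : List Bool).length ≤ n := (e x').2
  set m : List Bool := (e x' : List Bool) ++ List.replicate (n - (e x' : List Bool).length) true
    with hm
  have hmFB : m ∈ FullBin n := by simp [FullBin, hm]; omega
  set p := e.symm ⟨m, hmFB⟩ with hp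
  have hep : e p = ⟨m, hmFB⟩ := Equiv.apply_symm_apply e ⟨m, hmFB⟩
  refine ⟨(p : List Bool), ?_, ?_⟩
  · rw [term_iff e he p, hep]
    simp [hm]; omega
  · rw [he x' p, hep]
    exact List.prefix_append _ _

lemma prefix_dropLast_iff {x y : List Bool} {n : ℕ} (hx : x.length ≤ n)
    (hy : y.length = n + 1) : x <+: y.dropLast ↔ x <+: y := by
  rw [List.dropLast_eq_take, List.prefix_take_iff]
  constructor
  · exact fun h => h.1
  · exact fun h => ⟨h, by omega⟩

/-- Let `Θ` be the canonical isomorphism from the splitting nodes of the perfect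
tree `S` onto `2^{<ω}` and `D` a dense subset of Cohen forcing. Then
`D_S = {t ∈ 𝔸_{𝕊,S} : ∀ p ∈ Term t, Θ p ∈ D}` is dense in `𝔸_{𝕊,S}`. -/
theorem sacksAux_dense_from_cohen_dense (S : Set (List Bool)) (hS : PerfectTree S)
    (Θ : List Bool → List Bool)
    (hbij : Set.BijOn Θ (splitNodes S) Set.univ)
    (hord : ∀ a ∈ splitNodes S, ∀ b ∈ splitNodes S, (a <+: b ↔ Θ a <+: Θ b))
    (D : Set (List Bool)) (hD : ∀ a : List Bool, ∃ b ∈ D, a <+: b) :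
    ∀ t ∈ SacksAux S, ∃ t' ∈ SacksAux S, EndExt t' t ∧ ∀ p ∈ Term t', Θ p ∈ D := by
  classical
  intro t ht
  obtain ⟨htS, htF, n, e, he⟩ := ht
  have hlen_le : ∀ l ∈ t, l.length ≤ height t := fun l hl =>
    le_csSup ((htF.image _).bddAbove) ⟨l, hl, rfl⟩
  -- key choice of extensions
  have hkey : ∀ p : List Bool, ∃ c : Bool → List Bool, p ∈ t →
      (∀ i, c i ∈ splitNodes S ∧ Θ (c i) ∈ D ∧ p <+: c i ∧ height t < (c i).length) ∧
      ¬ c false <+: c true ∧ ¬ c true <+: c false := by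
    intro p
    by_cases hp : p ∈ t
    · have hpS : p ∈ S := htS hp
      obtain ⟨q, hq, hpq, hqlen⟩ := exists_split_ge hS (height t + 1) p hpS
      obtain ⟨c0, hc0, hd0, hq0⟩ := exists_split_inD hS hbij hord hD (q ++ [false]) hq.2.1
      obtain ⟨c1, hc1, hd1, hq1⟩ := exists_split_inD hS hbij hord hD (q ++ [true]) hq.2.2
      refine ⟨fun i => bif i then c1 else c0, fun _ => ⟨?_, ?_, ?_⟩⟩
      · intro i
        cases i
        · refine ⟨hc0, hd0, hpq.trans ((List.prefix_append q [false]).trans hq0), ?_⟩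
          show height t < c0.length
          have := hq0.length_le
          simp at this
          omega
        · refine ⟨hc1, hd1, hpq.trans ((List.prefix_append q [true]).trans hq1), ?_⟩
          show height t < c1.length
          have := hq1.length_le
          simp at this
          omega
      · intro hpre
        have hpre' : c0 <+: c1 := hpre
        rcases prefix_comparable (hq0.trans hpre') hq1 with h | h
        · have := h.eq_of_length_le (by simp)
          simp at this
        · have := h.eq_of_length_le (by simp)
          simp at this
      · intro hpre
        have hpre' : c1 <+: c0 := hpre
        rcases prefix_comparable (hq1.trans hpre') hq0 with h | h
        · have := h.eq_of_length_le (by simp)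
          simp at this
        · have := h.eq_of_length_le (by simp)
          simp at this
    · exact ⟨fun _ => [], fun h => absurd h hp⟩
  choose c hc using hkey
  set T2 : Set (List Bool) :=
    t ∪ (fun pi : List Bool × Bool => c pi.1 pi.2) '' (Term t ×ˢ (Set.univ : Set Bool)) with hT2
  have hcmem : ∀ p ∈ Term t, ∀ i : Bool, c p i ∈ T2 := fun p hp i =>
    Or.inr ⟨(p, i), ⟨hp, trivial⟩, rfl⟩
  have hclen : ∀ p ∈ Term t, ∀ i : Bool, height t < (c p i).length := fun p hp i =>
    ((hc p hp.1).1 i).2.2.2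
  have hcpre : ∀ p ∈ Term t, ∀ i, p <+: c p i := fun p hp i => ((hc p hp.1).1 i).2.2.1
  have hcsplit : ∀ p ∈ Term t, ∀ i, c p i ∈ splitNodes S := fun p hp i => ((hc p hp.1).1 i).1
  have hcD : ∀ p ∈ Term t, ∀ i, Θ (c p i) ∈ D := fun p hp i => ((hc p hp.1).1 i).2.1
  have hcinj : ∀ p ∈ Term t, ∀ p' ∈ Term t, ∀ i i' : Bool,
      c p i <+: c p' i' → p = p' ∧ i = i' := by
    intro p hp p' hp' i i' hpre
    have hpp : p = p' := by
      rcases prefix_comparable ((hcpre p hp i).trans hpre) (hcpre p' hp' i') with h | h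
      · exact (hp.2 p' hp'.1 h).symm
      · exact hp'.2 p hp.1 h
    subst hpp
    have hii : i = i' := by
      cases i <;> cases i'
      · rfl
      · exact absurd hpre (hc p hp.1).2.1
      · exact absurd hpre (hc p hp.1).2.2
      · rfl
    exact ⟨rfl, hii⟩
  have hT2S : T2 ⊆ S := by
    rintro x (hx | ⟨⟨p, i⟩, ⟨hpT, -⟩, rfl⟩)
    · exact htS hx
    · exact (hcsplit p hpT i).1
  have hT2fin : T2.Finite := by
    apply Set.Finite.union htF
    apply Set.Finite.image
    exact (htF.subset (fun x hx => hx.1)).prod Set.finite_univ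
  have hEnd : EndExt T2 t := by
    refine ⟨Set.subset_union_left, ?_⟩
    rintro l (hl | ⟨⟨p, i⟩, ⟨hpT, -⟩, rfl⟩) hlen
    · exact hl
    · exact absurd hlen (not_le.mpr (hclen p hpT i))
  have hTermD : ∀ p ∈ Term T2, Θ p ∈ D := by
    intro x hx
    rcases hx.1 with hxt | ⟨⟨p, i⟩, ⟨hpT, -⟩, rfl⟩
    · exfalso
      obtain ⟨m, hmT, hxm⟩ := exists_term_above e he x hxt
      have h1 : c m true ∈ T2 := hcmem m hmT true
      have h2 : x <+: c m true := hxm.trans (hcpre m hmT true)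
      have h3 := hx.2 _ h1 h2
      have h4 := hclen m hmT true
      have h5 := hlen_le x hxt
      rw [← h3] at h5
      omega
    · exact hcD p hpT i
  -- the isomorphism with FullBin (n+1)
  have hlen1 : ∀ x : ↥(FullBin (n + 1)), ¬ (x : List Bool).length ≤ n →
      (x : List Bool).length = n + 1 := by
    intro x h
    have h2 : (x : List Bool).length ≤ n + 1 := x.2
    omega
  have hdropmem : ∀ l : List Bool, l.length = n + 1 → l.dropLast ∈ FullBin n := by
    intro l h
    show l.dropLast.length ≤ n
    rw [List.length_dropLast]
    omega
  have hPdrop : ∀ (l : List Bool) (h : l.dropLast ∈ FullBin n), l.length = n + 1 →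
      (e.symm ⟨l.dropLast, h⟩ : List Bool) ∈ Term t := by
    intro l h hl
    rw [term_iff e he, Equiv.apply_symm_apply]
    show l.dropLast.length = n
    rw [List.length_dropLast]
    omega
  have hne1 : ∀ x : ↥(FullBin (n + 1)), ¬ (x : List Bool).length ≤ n →
      (x : List Bool) ≠ [] := by
    intro x h
    have := hlen1 x h
    exact List.ne_nil_of_length_pos (by omega)
  set F : ↥(FullBin (n + 1)) → ↥T2 := fun x =>
    if h : (x : List Bool).length ≤ n then
      ⟨(e.symm ⟨(x : List Bool), h⟩ : List Bool), Or.inl (e.symm ⟨(x : List Bool), h⟩).2⟩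
    else
      ⟨c (e.symm ⟨(x : List Bool).dropLast, hdropmem _ (hlen1 x h)⟩ : List Bool)
        ((x : List Bool).getLast (hne1 x h)),
        hcmem _ (hPdrop _ _ (hlen1 x h)) _⟩ with hF
  have hFpos : ∀ (x : ↥(FullBin (n + 1))) (h : (x : List Bool).length ≤ n),
      (F x : List Bool) = (e.symm ⟨(x : List Bool), h⟩ : List Bool) := by
    intro x h
    rw [hF]
    simp only
    rw [dif_pos h]
  have hFneg : ∀ (x : ↥(FullBin (n + 1))) (h : ¬ (x : List Bool).length ≤ n),
      (F x : List Bool) =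
        c (e.symm ⟨(x : List Bool).dropLast, hdropmem _ (hlen1 x h)⟩ : List Bool)
          ((x : List Bool).getLast (hne1 x h)) := by
    intro x h
    rw [hF]
    simp only
    rw [dif_neg h]
  -- order property
  have hFord : ∀ x y : ↥(FullBin (n + 1)),
      (x : List Bool) <+: (y : List Bool) ↔ (F x : List Bool) <+: (F y : List Bool) := by
    intro x y
    by_cases hx : (x : List Bool).length ≤ n <;> by_cases hy : (y : List Bool).length ≤ n
    · rw [hFpos x hx, hFpos y hy]
      have h1 := he (e.symm ⟨(x : List Bool), hx⟩) (e.symm ⟨(y : List Bool), hy⟩)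
      rw [Equiv.apply_symm_apply, Equiv.apply_symm_apply] at h1
      exact h1.symm
    · -- x short, y long
      rw [hFpos x hx, hFneg y hy]
      have hPT : (e.symm ⟨(y : List Bool).dropLast, hdropmem _ (hlen1 y hy)⟩ : List Bool) ∈ Term t :=
        hPdrop (y : List Bool) (hdropmem _ (hlen1 y hy)) (hlen1 y hy)
      have h1 := he (e.symm ⟨(x : List Bool), hx⟩)
        (e.symm ⟨(y : List Bool).dropLast, hdropmem _ (hlen1 y hy)⟩)
      rw [Equiv.apply_symm_apply, Equiv.apply_symm_apply] at h1
      have key : (x : List Bool) <+: (y : List Bool) ↔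
          (e.symm ⟨(x : List Bool), hx⟩ : List Bool) <+:
            (e.symm ⟨(y : List Bool).dropLast, hdropmem _ (hlen1 y hy)⟩ : List Bool) := by
        rw [← prefix_dropLast_iff hx (hlen1 y hy)]
        exact h1.symm
      constructor
      · intro h
        exact (key.1 h).trans (hcpre _ hPT _)
      · intro h
        rcases prefix_comparable h (hcpre _ hPT ((y : List Bool).getLast (hne1 y hy))) with h3 | h3
        · exact key.2 h3
        · have h4 := hPT.2 _ (e.symm ⟨(x : List Bool), hx⟩).2 h3
          exact key.2 (by rw [h4])
    · -- x long, y short : both sides false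
      refine iff_of_false ?_ ?_
      · intro h
        have h1 := h.length_le
        have h2 := hlen1 x hx
        omega
      · intro h
        rw [hFneg x hx, hFpos y hy] at h
        have h1 := h.length_le
        have h2 : (e.symm ⟨(y : List Bool), hy⟩ : List Bool).length ≤ height t :=
          hlen_le _ (e.symm ⟨(y : List Bool), hy⟩).2
        have h3 := hclen _ (hPdrop (x : List Bool) (hdropmem _ (hlen1 x hx)) (hlen1 x hx))
          ((x : List Bool).getLast (hne1 x hx))
        omega
    · -- both long
      constructor
      · intro h
        have hxy : x = y := Subtype.ext (h.eq_of_length_le (by rw [hlen1 x hx, hlen1 y hy]))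
        rw [hxy]
      · intro h
        rw [hFneg x hx, hFneg y hy] at h
        obtain ⟨hpp, hii⟩ := hcinj _ (hPdrop (x : List Bool) (hdropmem _ (hlen1 x hx)) (hlen1 x hx))
          _ (hPdrop (y : List Bool) (hdropmem _ (hlen1 y hy)) (hlen1 y hy)) _ _ h
        have h1 : (⟨(x : List Bool).dropLast, hdropmem _ (hlen1 x hx)⟩ : ↥(FullBin n)) =
            ⟨(y : List Bool).dropLast, hdropmem _ (hlen1 y hy)⟩ :=
          e.symm.injective (Subtype.ext hpp)
        have h3 : (x : List Bool).dropLast = (y : List Bool).dropLast := congrArg Subtype.val h1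
        have h4 : (x : List Bool) = (y : List Bool) := by
          rw [← List.dropLast_append_getLast (hne1 x hx),
            ← List.dropLast_append_getLast (hne1 y hy), h3, hii]
        rw [h4]
  have hFinj : Function.Injective F := by
    intro x y hxy
    have h1 : (x : List Bool) <+: (y : List Bool) := by
      refine (hFord x y).2 ?_
      rw [hxy]
    have h2 : (y : List Bool) <+: (x : List Bool) := by
      refine (hFord y x).2 ?_
      rw [hxy]
    exact Subtype.ext (h1.eq_of_length_le h2.length_le)
  have hFsurj : Function.Surjective F := by
    rintro ⟨z, hz | ⟨⟨p, i⟩, ⟨hpT, -⟩, rfl⟩⟩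
    · have hx : ((⟨(e ⟨z, hz⟩ : List Bool), le_trans (e ⟨z, hz⟩).2 (Nat.le_succ n)⟩ :
          ↥(FullBin (n + 1))) : List Bool).length ≤ n := (e ⟨z, hz⟩).2
      refine ⟨⟨(e ⟨z, hz⟩ : List Bool), le_trans (e ⟨z, hz⟩).2 (Nat.le_succ n)⟩, ?_⟩
      apply Subtype.ext
      rw [hFpos _ hx]
      have h1 : (⟨((⟨(e ⟨z, hz⟩ : List Bool), le_trans (e ⟨z, hz⟩).2 (Nat.le_succ n)⟩ :
          ↥(FullBin (n + 1))) : List Bool), hx⟩ : ↥(FullBin n)) = e ⟨z, hz⟩ := Subtype.ext rfl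
      rw [h1, Equiv.symm_apply_apply]
    · have heplen : (e ⟨p, hpT.1⟩ : List Bool).length = n := (term_iff e he ⟨p, hpT.1⟩).1 hpT
      have hxmem : ((e ⟨p, hpT.1⟩ : List Bool) ++ [i]) ∈ FullBin (n + 1) := by
        show ((e ⟨p, hpT.1⟩ : List Bool) ++ [i]).length ≤ n + 1
        simp [heplen]
      have hx : ¬ ((⟨(e ⟨p, hpT.1⟩ : List Bool) ++ [i], hxmem⟩ :
          ↥(FullBin (n + 1))) : List Bool).length ≤ n := by
        show ¬ ((e ⟨p, hpT.1⟩ : List Bool) ++ [i]).length ≤ n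
        simp [heplen]
      refine ⟨⟨(e ⟨p, hpT.1⟩ : List Bool) ++ [i], hxmem⟩, ?_⟩
      apply Subtype.ext
      rw [hFneg _ hx]
      have h1 : (⟨((⟨(e ⟨p, hpT.1⟩ : List Bool) ++ [i], hxmem⟩ :
            ↥(FullBin (n + 1))) : List Bool).dropLast, hdropmem _ (hlen1 _ hx)⟩ : ↥(FullBin n)) =
          e ⟨p, hpT.1⟩ := Subtype.ext List.dropLast_concat
      rw [h1, Equiv.symm_apply_apply]
      have h2 : ((⟨(e ⟨p, hpT.1⟩ : List Bool) ++ [i], hxmem⟩ :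
          ↥(FullBin (n + 1))) : List Bool).getLast (hne1 _ hx) = i := List.getLast_append _
      rw [h2]
  refine ⟨T2, ⟨hT2S, hT2fin, n + 1, (Equiv.ofBijective F ⟨hFinj, hFsurj⟩).symm, ?_⟩, hEnd, hTermD⟩
  intro a b
  have ha : F ((Equiv.ofBijective F ⟨hFinj, hFsurj⟩).symm a) = a :=
    (Equiv.ofBijective F ⟨hFinj, hFsurj⟩).apply_symm_apply a
  have hb : F ((Equiv.ofBijective F ⟨hFinj, hFsurj⟩).symm b) = b :=
    (Equiv.ofBijective F ⟨hFinj, hFsurj⟩).apply_symm_apply b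
  have h1 := hFord ((Equiv.ofBijective F ⟨hFinj, hFsurj⟩).symm a)
    ((Equiv.ofBijective F ⟨hFinj, hFsurj⟩).symm b)
  rw [ha, hb] at h1
  exact h1.symm
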